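/- Let P = {x ∈ ℝⁿ : Mx ≤ b} be a polyhedron and let F be a nonempty face of P. Then the recession cone of F equals the set {x : Mx ≤ 0, rowᵢ(M)x = 0 for all i ∈ I}, where I is the index set of constraints of Mx ≤ b that are tight on all of F; in particular rec(F) is a face of rec(P). -/
import Mathlib

open Finset

/-- `F` is a face of `S`: the set of maximizers of some linear functional over `S`
(this includes `S` itself, via the zero functional). -/
def IsFaceOf {n : ℕ} (S F : Set (Fin n → ℝ)) : Prop :=
  ∃ c : Fin n → ℝ, F = {x ∈ S | ∀ y ∈ S, ∑ j, c j * y j ≤ ∑ j, c j * x j}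

/-- Recession cone of a set. -/
def recCone {n : ℕ} (S : Set (Fin n → ℝ)) : Set (Fin n → ℝ) :=
  {d | ∀ x ∈ S, ∀ t : ℝ, 0 ≤ t → x + t • d ∈ S}

private lemma dot_add_smul {n : ℕ} (c x d : Fin n → ℝ) (t : ℝ) :
    ∑ j, c j * (x + t • d) j = (∑ j, c j * x j) + t * ∑ j, c j * d j := by
  simp [mul_add, Finset.sum_add_distrib, Finset.mul_sum, mul_left_comm]

private lemma dot_sub {n : ℕ} (c x z : Fin n → ℝ) :
    ∑ j, c j * (x - z) j = (∑ j, c j * x j) - ∑ j, c j * z j := by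
  simp [mul_sub, Finset.sum_sub_distrib]

private lemma dot_combo {n : ℕ} (c u v : Fin n → ℝ) (a b : ℝ) :
    ∑ j, c j * (a • u + b • v) j = a * (∑ j, c j * u j) + b * ∑ j, c j * v j := by
  simp [mul_add, Finset.sum_add_distrib, Finset.mul_sum, mul_left_comm]

private lemma dot_centroid {n : ℕ} {ι : Type*} (t : Finset ι) (c : Fin n → ℝ)
    (w : ι → ℝ) (z : ι → Fin n → ℝ) :
    ∑ j, c j * (∑ k ∈ t, w k • z k) j = ∑ k ∈ t, w k * ∑ j, c j * z k j := by
  simp only [Finset.sum_apply, Pi.smul_apply, smul_eq_mul, Finset.mul_sum]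
  rw [Finset.sum_comm]
  refine Finset.sum_congr rfl fun k _ => Finset.sum_congr rfl fun j _ => by ring

theorem recCone_face {m n : ℕ} (M : Matrix (Fin m) (Fin n) ℝ) (b : Fin m → ℝ)
    (P : Set (Fin n → ℝ)) (hP : P = {x | ∀ i, ∑ j, M i j * x j ≤ b i})
    (F : Set (Fin n → ℝ)) (hF : IsFaceOf P F) (hFne : F.Nonempty)
    (I : Set (Fin m)) (hI : I = {i | ∀ x ∈ F, ∑ j, M i j * x j = b i}) :
    recCone F =
      {d | (∀ i, ∑ j, M i j * d j ≤ 0) ∧ ∀ i ∈ I, ∑ j, M i j * d j = 0} ∧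
    IsFaceOf (recCone P) (recCone F) := by
  classical
  obtain ⟨c, hc⟩ := hF
  obtain ⟨x₀, hx₀⟩ := hFne
  have hPmem : ∀ x : Fin n → ℝ, x ∈ P ↔ ∀ i, ∑ j, M i j * x j ≤ b i := by
    intro x; rw [hP]; exact Iff.rfl
  have hFmem : ∀ x : Fin n → ℝ, x ∈ F ↔
      x ∈ P ∧ ∀ y ∈ P, ∑ j, c j * y j ≤ ∑ j, c j * x j := by
    intro x; rw [hc]; exact Iff.rfl
  have hFP : F ⊆ P := fun x hx => ((hFmem x).mp hx).1
  have hx₀P : x₀ ∈ P := hFP hx₀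
  have hImem : ∀ i : Fin m, i ∈ I ↔ ∀ x ∈ F, ∑ j, M i j * x j = b i := by
    intro i; rw [hI]; exact Iff.rfl
  -- unboundedness helper
  have hub : ∀ a s bb : ℝ, (∀ t : ℝ, 0 ≤ t → a + t * s ≤ bb) → s ≤ 0 := by
    intro a s bb h
    by_contra hpos
    push_neg at hpos
    have h0 := h 0 le_rfl
    have h1 := h ((bb - a + 1) / s) (by apply div_nonneg <;> linarith)
    rw [div_mul_cancel₀] at h1
    · linarith
    · exact ne_of_gt hpos
  -- slack point
  have hslack : ∃ w ∈ F, ∀ i, i ∉ I → ∑ j, M i j * w j < b i := by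
    rcases isEmpty_or_nonempty (Fin m) with hm | hm
    · exact ⟨x₀, hx₀, fun i => (IsEmpty.false i).elim⟩
    · have hchoice : ∀ i : Fin m, ∃ y, y ∈ F ∧ (i ∉ I → ∑ j, M i j * y j < b i) := by
        intro i
        by_cases hi : i ∈ I
        · exact ⟨x₀, hx₀, fun h => absurd hi h⟩
        · rw [hImem] at hi
          push_neg at hi
          obtain ⟨y, hyF, hy⟩ := hi
          exact ⟨y, hyF, fun _ => lt_of_le_of_ne ((hPmem y).mp (hFP hyF) i) hy⟩
      choose y hyF hy using hchoice
      -- F is convex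
      have hFconv : Convex ℝ F := by
        intro u hu v hv a a' ha ha' haa
        rw [hFmem] at hu hv ⊢
        constructor
        · rw [hPmem]
          intro i
          rw [dot_combo]
          have h1 := mul_le_mul_of_nonneg_left ((hPmem u).mp hu.1 i) ha
          have h2 := mul_le_mul_of_nonneg_left ((hPmem v).mp hv.1 i) ha'
          have h3 : a * b i + a' * b i = b i := by rw [← add_mul, haa, one_mul]
          linarith
        · intro z hz
          rw [dot_combo]
          have h1 := mul_le_mul_of_nonneg_left (hu.2 z hz) ha
          have h2 := mul_le_mul_of_nonneg_left (hv.2 z hz) ha'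
          have h3 : a * (∑ j, c j * z j) + a' * (∑ j, c j * z j) = ∑ j, c j * z j := by
            rw [← add_mul, haa, one_mul]
          linarith
      have hmne : (m : ℝ) ≠ 0 := by
        have : 0 < m := Fin.pos_iff_nonempty.mpr hm
        positivity
      set xb : Fin n → ℝ := ∑ k : Fin m, ((m : ℝ)⁻¹) • y k with hxb
      have hxbF : xb ∈ F := by
        apply hFconv.sum_mem
        · intro k _; positivity
        · simp [Finset.sum_const, Finset.card_univ]
          field_simp
        · intro k _; exact hyF k
      refine ⟨xb, hxbF, fun i hi => ?_⟩
      have hrow : ∑ j, M i j * xb j = ∑ k : Fin m, (m : ℝ)⁻¹ * ∑ j, M i j * y k j :=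
        dot_centroid _ _ _ _
      rw [hrow]
      have hlt : ∑ k : Fin m, (m : ℝ)⁻¹ * ∑ j, M i j * y k j
          < ∑ k : Fin m, (m : ℝ)⁻¹ * b i := by
        apply Finset.sum_lt_sum
        · intro k _
          have := (hPmem (y k)).mp (hFP (hyF k)) i
          have hinv : (0:ℝ) ≤ (m : ℝ)⁻¹ := by positivity
          nlinarith
        · refine ⟨i, Finset.mem_univ i, ?_⟩
          have := hy i hi
          have hinv : (0:ℝ) < (m : ℝ)⁻¹ := by
            have : 0 < m := Fin.pos_iff_nonempty.mpr hm
            positivity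
          nlinarith
      calc _ < ∑ k : Fin m, (m : ℝ)⁻¹ * b i := hlt
        _ = b i := by
            rw [Finset.sum_const, Finset.card_univ, Fintype.card_fin, nsmul_eq_mul]
            field_simp
  obtain ⟨xb, hxbF, hxbs⟩ := hslack
  have hxbP : xb ∈ P := hFP hxbF
  have hxbI : ∀ i ∈ I, ∑ j, M i j * xb j = b i := fun i hi => ((hImem i).mp hi) xb hxbF
  -- key lemma: tight-on-I points of P are in F
  have hkey : ∀ z : Fin n → ℝ, (∀ i, ∑ j, M i j * z j ≤ b i) →
      (∀ i ∈ I, ∑ j, M i j * z j = b i) → z ∈ F := by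
    intro z hzP hzI
    set g : Fin m → ℝ := fun i => (∑ j, M i j * xb j) - (∑ j, M i j * z j) with hg
    set T : Finset ℝ := insert 1 ((Finset.univ.filter (fun i => i ∉ I)).image
      fun i => (b i - ∑ j, M i j * xb j) / (|g i| + 1)) with hT
    have hTne : T.Nonempty := ⟨1, Finset.mem_insert_self _ _⟩
    set ε : ℝ := T.min' hTne with hε
    have hεpos : 0 < ε := by
      rw [hε, Finset.lt_min'_iff]
      intro a ha
      rw [hT, Finset.mem_insert] at ha
      rcases ha with rfl | ha
      · norm_num
      · obtain ⟨i, hi, rfl⟩ := Finset.mem_image.mp ha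
        rw [Finset.mem_filter] at hi
        apply div_pos
        · have := hxbs i hi.2
          linarith
        · positivity
    have hεi : ∀ i, i ∉ I → ε * g i ≤ b i - ∑ j, M i j * xb j := by
      intro i hi
      have h1 : ε ≤ (b i - ∑ j, M i j * xb j) / (|g i| + 1) := by
        apply Finset.min'_le
        rw [hT]
        apply Finset.mem_insert_of_mem
        exact Finset.mem_image.mpr ⟨i, Finset.mem_filter.mpr ⟨Finset.mem_univ i, hi⟩, rfl⟩
      have hd : (0:ℝ) < |g i| + 1 := by positivity
      have h2 : ε * (|g i| + 1) ≤ b i - ∑ j, M i j * xb j := (le_div_iff₀ hd).mp h1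
      have h3 : g i ≤ |g i| := le_abs_self _
      nlinarith
    set w : Fin n → ℝ := xb + ε • (xb - z) with hw
    have hwrow : ∀ i, ∑ j, M i j * w j = (∑ j, M i j * xb j) + ε * g i := by
      intro i
      rw [hw, dot_add_smul, dot_sub]
    have hwP : w ∈ P := by
      rw [hPmem]
      intro i
      rw [hwrow]
      by_cases hi : i ∈ I
      · have h1 := hxbI i hi
        have h2 := hzI i hi
        have : g i = 0 := by rw [hg]; simp [h1, h2]
        rw [this]; linarith
      · have := hεi i hi
        linarith
    have hmax := ((hFmem xb).mp hxbF).2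
    have h1 := hmax w hwP
    have hwc : ∑ j, c j * w j =
        (∑ j, c j * xb j) + ε * ((∑ j, c j * xb j) - ∑ j, c j * z j) := by
      rw [hw, dot_add_smul, dot_sub]
    rw [hwc] at h1
    have h2 : ∑ j, c j * xb j ≤ ∑ j, c j * z j := by nlinarith
    rw [hFmem]
    refine ⟨(hPmem z).mpr hzP, fun u hu => ?_⟩
    exact le_trans (hmax u hu) h2
  -- first conjunct
  have hrecF : recCone F =
      {d | (∀ i, ∑ j, M i j * d j ≤ 0) ∧ ∀ i ∈ I, ∑ j, M i j * d j = 0} := by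
    ext d
    constructor
    · intro hd
      constructor
      · intro i
        apply hub (∑ j, M i j * x₀ j) _ (b i)
        intro t ht
        have := (hPmem _).mp (hFP (hd x₀ hx₀ t ht)) i
        rw [dot_add_smul] at this
        linarith
      · intro i hi
        have h1 : ∑ j, M i j * (x₀ + (1:ℝ) • d) j = b i :=
          ((hImem i).mp hi) _ (hd x₀ hx₀ 1 one_pos.le)
        have h0 : ∑ j, M i j * x₀ j = b i := ((hImem i).mp hi) x₀ hx₀
        rw [dot_add_smul] at h1
        linarith
    · rintro ⟨h1, h2⟩ x hxF t ht
      apply hkey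
      · intro i
        rw [dot_add_smul]
        have := (hPmem x).mp (hFP hxF) i
        nlinarith [h1 i]
      · intro i hi
        rw [dot_add_smul, h2 i hi, ((hImem i).mp hi) x hxF]
        ring
  -- recCone P characterization
  have hrecP : ∀ d : Fin n → ℝ, d ∈ recCone P ↔ ∀ i, ∑ j, M i j * d j ≤ 0 := by
    intro d
    constructor
    · intro hd i
      apply hub (∑ j, M i j * x₀ j) _ (b i)
      intro t ht
      have := (hPmem _).mp (hd x₀ hx₀P t ht) i
      rw [dot_add_smul] at this
      linarith
    · intro hd x hxP t ht
      rw [hPmem]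
      intro i
      rw [dot_add_smul]
      have := (hPmem x).mp hxP i
      nlinarith [hd i]
  refine ⟨hrecF, ⟨fun j => ∑ i ∈ Finset.univ.filter (· ∈ I), M i j, ?_⟩⟩
  have hdot : ∀ d : Fin n → ℝ,
      ∑ j, (∑ i ∈ Finset.univ.filter (· ∈ I), M i j) * d j
        = ∑ i ∈ Finset.univ.filter (· ∈ I), ∑ j, M i j * d j := by
    intro d
    rw [Finset.sum_comm]
    simp [Finset.sum_mul]
  ext d
  rw [hrecF]
  simp only [Set.mem_setOf_eq]
  constructor
  · rintro ⟨h1, h2⟩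
    have hd0 : ∑ j, (∑ i ∈ Finset.univ.filter (· ∈ I), M i j) * d j = 0 := by
      rw [hdot]
      apply Finset.sum_eq_zero
      intro i hi
      exact h2 i (Finset.mem_filter.mp hi).2
    refine ⟨(hrecP d).mpr h1, fun e he => ?_⟩
    rw [hd0, hdot]
    apply Finset.sum_nonpos
    intro i _
    exact (hrecP e).mp he i
  · rintro ⟨hd, hmax⟩
    have h1 := (hrecP d).mp hd
    refine ⟨h1, ?_⟩
    have h0P : (0 : Fin n → ℝ) ∈ recCone P := by
      rw [hrecP]
      intro i
      simp
    have h2 := hmax 0 h0P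
    have h3 : ∑ j, (∑ i ∈ Finset.univ.filter (· ∈ I), M i j) * (0 : Fin n → ℝ) j = 0 := by
      simp
    rw [h3, hdot] at h2
    have h4 : ∑ i ∈ Finset.univ.filter (· ∈ I), ∑ j, M i j * d j = 0 := by
      apply le_antisymm
      · apply Finset.sum_nonpos
        intro i _
        exact h1 i
      · exact h2
    intro i hi
    have := (Finset.sum_eq_zero_iff_of_nonpos (fun i _ => h1 i)).mp h4 i
      (Finset.mem_filter.mpr ⟨Finset.mem_univ i, hi⟩)
    exact this
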